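/- Let {x₁,…,x_s} ⊂ Rⁿ be nonzero vectors whose span has dimension s−1 (with x₁,…,x_{s−1} linearly independent). Then the n × n² matrix B := Σ_{i=1}^s xᵢ (xᵢ ⊗ xᵢ)ᵀ has rank at least s−2. Moreover, rank(B) = s−2 if and only if xᵢ = −x_j for some pair i ≠ j. -/

import Mathlib

open Submodule Set Module
open scoped Matrix Pointwise

namespace RankDefectAux

variable {n s : ℕ}

/-- The linear map sending coefficients to the corresponding linear combination of the `x k`. -/
noncomputable def TT (x : Fin s → Fin n → ℝ) : (Fin s → ℝ) →ₗ[ℝ] (Fin n → ℝ) where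
  toFun c := ∑ k, c k • x k
  map_add' a b := by simp [add_smul, Finset.sum_add_distrib]
  map_smul' r a := by
    simp only [Pi.smul_apply, smul_eq_mul, RingHom.id_apply, Finset.smul_sum, smul_smul]

lemma TT_apply (x : Fin s → Fin n → ℝ) (c : Fin s → ℝ) : TT x c = ∑ k, c k • x k := rfl

lemma TT_single (x : Fin s → Fin n → ℝ) (k : Fin s) (r : ℝ) :
    TT x (Pi.single k r) = r • x k := by
  rw [TT_apply, Finset.sum_eq_single k]
  · simp
  · intro b _ hb; rw [Pi.single_eq_of_ne hb, zero_smul]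
  · simp

lemma range_TT (x : Fin s → Fin n → ℝ) :
    LinearMap.range (TT x) = span ℝ (Set.range x) := by
  apply le_antisymm
  · rintro v hv
    obtain ⟨c, rfl⟩ := LinearMap.mem_range.mp hv
    show (∑ k, c k • x k) ∈ _
    exact sum_mem fun k _ => smul_mem _ _ (subset_span (Set.mem_range_self k))
  · rw [span_le]
    rintro _ ⟨k, rfl⟩
    exact LinearMap.mem_range.mpr ⟨Pi.single k 1, by rw [TT_single, one_smul]⟩

/-- The linear functional `y ↦ ∑ c k * y k`. -/
noncomputable def phi (c : Fin s → ℝ) : (Fin s → ℝ) →ₗ[ℝ] ℝ where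
  toFun y := ∑ k, c k * y k
  map_add' a b := by simp [mul_add, Finset.sum_add_distrib]
  map_smul' r a := by
    simp only [Pi.smul_apply, smul_eq_mul, RingHom.id_apply, Finset.mul_sum]
    exact Finset.sum_congr rfl fun k _ => by ring

lemma phi_apply (c y : Fin s → ℝ) : phi c y = ∑ k, c k * y k := rfl

lemma phi_single (c : Fin s → ℝ) (k : Fin s) (r : ℝ) : phi c (Pi.single k r) = c k * r := by
  rw [phi_apply, Finset.sum_eq_single k]
  · simp
  · intro b _ hb; rw [Pi.single_eq_of_ne hb, mul_zero]
  · simp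

lemma eq_sum_single (v : Fin s → ℝ) : v = ∑ k, v k • (Pi.single k (1 : ℝ) : Fin s → ℝ) := by
  ext t
  simp [Finset.sum_apply, Pi.single_apply]

lemma mem_span_single (A : Set (Fin s)) (v : Fin s → ℝ) (h : ∀ k, k ∉ A → v k = 0) :
    v ∈ span ℝ ((fun k => Pi.single k (1 : ℝ)) '' A) := by
  rw [eq_sum_single v]
  refine sum_mem fun k _ => ?_
  by_cases hk : k ∈ A
  · exact smul_mem _ _ (subset_span ⟨k, hk, rfl⟩)
  · rw [h k hk, zero_smul]; exact zero_mem _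

lemma card_ne_ne {i j : Fin s} (hij : i ≠ j) :
    Fintype.card {k : Fin s // k ≠ i ∧ k ≠ j} = s - 2 := by
  rw [Fintype.card_subtype]
  have h : Finset.univ.filter (fun k : Fin s => k ≠ i ∧ k ≠ j) = Finset.univ \ {i, j} := by
    ext k; simp [not_or]
  rw [h, Finset.card_sdiff_of_subset (by simp)]
  simp [Finset.card_pair hij]

lemma card_ne (j : Fin s) : Fintype.card {k : Fin s // k ≠ j} = s - 1 := by
  rw [Fintype.card_subtype]
  have h : Finset.univ.filter (fun k : Fin s => k ≠ j) = Finset.univ \ {j} := by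
    ext k; simp
  rw [h, Finset.card_sdiff_of_subset (by simp)]
  simp

lemma sum_pair_support {M : Type*} [AddCommMonoid M] {i j : Fin s} (hij : i ≠ j)
    (f : Fin s → M) (hf : ∀ k, k ≠ i → k ≠ j → f k = 0) :
    ∑ k, f k = f i + f j := by
  rw [← Finset.sum_subset (Finset.subset_univ {i, j})]
  · rw [Finset.sum_pair hij]
  · intro k _ hk
    simp only [Finset.mem_insert, Finset.mem_singleton, not_or] at hk
    exact hf k hk.1 hk.2

lemma indep_aux (x : Fin s → Fin n → ℝ) (c : Fin s → ℝ)
    (hrel : ∀ d, TT x d = 0 → ∃ r : ℝ, d = r • c) {j : Fin s} (hcj : c j ≠ 0) :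
    LinearIndependent ℝ (fun k : {k : Fin s // k ≠ j} => x k) := by
  classical
  rw [Fintype.linearIndependent_iff]
  intro g hg
  set d : Fin s → ℝ := fun k => if hk : k = j then 0 else g ⟨k, hk⟩ with hd
  have h1 : TT x d = ∑ k : {k : Fin s // k ≠ j}, g k • x k := by
    rw [TT_apply]
    rw [← Finset.sum_filter_of_ne (p := fun k : Fin s => k ≠ j)
      (fun k _ h hkj => h (by simp [hd, hkj]))]
    rw [Finset.sum_subtype (p := fun k : Fin s => k ≠ j)
      (Finset.univ.filter (fun k : Fin s => k ≠ j)) (by simp) (fun k => d k • x k)]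
    exact Finset.sum_congr rfl fun k _ => by simp [hd, k.2]
  have hTd : TT x d = 0 := by rw [h1, hg]
  obtain ⟨r, hr⟩ := hrel d hTd
  have hr0 : r = 0 := by
    have h2 := congrFun hr j
    have hdj : d j = 0 := by simp [hd]
    rw [hdj] at h2
    have h4 : r * c j = 0 := by simpa using h2.symm
    exact (mul_eq_zero.mp h4).resolve_right hcj
  intro k
  have h3 := congrFun hr k
  simp [hd, hr0, k.2] at h3
  exact h3

lemma pair_aux (x : Fin s → Fin n → ℝ) (c : Fin s → ℝ)
    (hrel : ∀ d, TT x d = 0 → ∃ r : ℝ, d = r • c) {a b : Fin s} (hab : a ≠ b)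
    (hpair : x a = -x b) :
    c a = c b ∧ c a ≠ 0 ∧ ∀ k, k ≠ a → k ≠ b → c k = 0 := by
  classical
  set d : Fin s → ℝ := Pi.single a 1 + Pi.single b 1 with hd
  have hTd : TT x d = 0 := by
    rw [hd, map_add, TT_single, TT_single, one_smul, one_smul, hpair, neg_add_cancel]
  obtain ⟨r, hr⟩ := hrel d hTd
  have hda : d a = 1 := by simp [hd, Pi.single_eq_of_ne hab]
  have hdb : d b = 1 := by simp [hd, Pi.single_eq_of_ne hab.symm]
  have hra : r * c a = 1 := by
    have h2 := congrFun hr a; rw [hda] at h2; exact h2.symm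
  have hrb : r * c b = 1 := by
    have h2 := congrFun hr b; rw [hdb] at h2; exact h2.symm
  have hrne : r ≠ 0 := by intro h; rw [h, zero_mul] at hra; exact zero_ne_one hra
  refine ⟨mul_left_cancel₀ hrne (hra.trans hrb.symm), ?_, ?_⟩
  · intro h; rw [h, mul_zero] at hra; exact zero_ne_one hra
  · intro k hka hkb
    have hdk : d k = 0 := by simp [hd, Pi.single_eq_of_ne hka, Pi.single_eq_of_ne hkb]
    have h2 := congrFun hr k
    rw [hdk] at h2
    exact (mul_eq_zero.mp h2.symm).resolve_left hrne

lemma third {α : Type*} {a b d i0 j0 : α} (hab : a ≠ b) (had : a ≠ d) (hbd : b ≠ d) :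
    ∃ k, (k = a ∨ k = b ∨ k = d) ∧ k ≠ i0 ∧ k ≠ j0 := by
  by_contra h
  push_neg at h
  have ha := h a (Or.inl rfl)
  have hb := h b (Or.inr (Or.inl rfl))
  have hd := h d (Or.inr (Or.inr rfl))
  by_cases h1 : a = i0 <;> by_cases h2 : b = i0 <;> by_cases h3 : d = i0 <;> simp_all

lemma cube_inj {a b : ℝ} (h : a ^ 3 = b ^ 3) : a = b :=
  (Odd.strictMono_pow (R := ℝ) (by decide)).injective h

end RankDefectAux

set_option maxHeartbeats 1000000 in
/-- for nonzero vectors x₁,…,x_s spanning a space of dimension s−1,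
the matrix B = Σ xᵢ(xᵢ⊗xᵢ)ᵀ has rank at least s−2, with equality iff xᵢ = −x_j for
some i ≠ j. -/
theorem rank_bound_of_defect_one (n s : ℕ) (hs : 1 ≤ s) (x : Fin s → Fin n → ℝ)
    (hx : ∀ i, x i ≠ 0)
    (hrank : Module.finrank ℝ (Submodule.span ℝ (Set.range x)) = s - 1)
    (B : Matrix (Fin n) (Fin n × Fin n) ℝ)
    (hB : B = Matrix.of fun i p => ∑ k, x k i * (x k p.1 * x k p.2)) :
    s - 2 ≤ B.rank ∧ (B.rank = s - 2 ↔ ∃ i j, i ≠ j ∧ x i = -x j) := by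
  classical
  open RankDefectAux in
  -- s ≥ 2
  have hs2 : 2 ≤ s := by
    rcases Nat.lt_or_ge s 2 with h | h
    · exfalso
      have hs1 : s = 1 := by omega
      subst hs1
      have h0 : Submodule.span ℝ (Set.range x) = ⊥ :=
        Submodule.finrank_eq_zero.mp (by simpa using hrank)
      exact hx 0 (Submodule.span_eq_bot.mp h0 _ (Set.mem_range_self 0))
    · exact h
  -- the kernel of TT x is one-dimensional, spanned by some c ≠ 0
  have hrangeT : Module.finrank ℝ (LinearMap.range (TT x)) = s - 1 := by
    rw [range_TT]; exact hrank
  have hfinpi : Module.finrank ℝ (Fin s → ℝ) = s := by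
    rw [Module.finrank_pi, Fintype.card_fin]
  have hkerT : Module.finrank ℝ (LinearMap.ker (TT x)) = 1 := by
    have h1 := LinearMap.finrank_range_add_finrank_ker (TT x)
    rw [hrangeT, hfinpi] at h1
    omega
  have hne : LinearMap.ker (TT x) ≠ ⊥ := by
    intro h; rw [h] at hkerT; simp at hkerT
  obtain ⟨c, hcker, hc0⟩ := (Submodule.ne_bot_iff _).mp hne
  have hkerspan : LinearMap.ker (TT x) = Submodule.span ℝ {c} := by
    refine (Submodule.eq_of_le_of_finrank_eq
      ((Submodule.span_singleton_le_iff_mem _ _).mpr hcker) ?_).symm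
    rw [finrank_span_singleton hc0, hkerT]
  have hrel : ∀ d, TT x d = 0 → ∃ r : ℝ, d = r • c := by
    intro d hd
    have hmem : d ∈ Submodule.span ℝ {c} := hkerspan ▸ LinearMap.mem_ker.mpr hd
    obtain ⟨r, hr⟩ := Submodule.mem_span_singleton.mp hmem
    exact ⟨r, hr.symm⟩
  have hTc : TT x c = 0 := hcker
  -- the support of c has at least two elements
  obtain ⟨i0, hi0⟩ : ∃ i0, c i0 ≠ 0 := by
    by_contra h; push_neg at h; exact hc0 (funext fun k => h k)
  obtain ⟨j0, hj0ne, hj0⟩ : ∃ j0, j0 ≠ i0 ∧ c j0 ≠ 0 := by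
    by_contra h; push_neg at h
    have hsum : TT x c = c i0 • x i0 := by
      rw [TT_apply, Finset.sum_eq_single i0]
      · intro b _ hb; rw [h b hb, zero_smul]
      · simp
    rw [hTc] at hsum
    exact hx i0 ((smul_eq_zero.mp hsum.symm).resolve_left hi0)
  have hij : i0 ≠ j0 := hj0ne.symm
  -- row space equals kernel of phi c
  set rows : Fin n → (Fin s → ℝ) := fun p k => x k p with hrows
  set Rspace : Submodule ℝ (Fin s → ℝ) := Submodule.span ℝ (Set.range rows) with hRspace
  have hRrank : Module.finrank ℝ Rspace = s - 1 := by
    set X : Matrix (Fin n) (Fin s) ℝ := Matrix.of fun i k => x k i with hX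
    have h1 : X.rank = s - 1 := by
      rw [Matrix.rank_eq_finrank_span_cols]
      have h2 : Set.range X.col = Set.range x := rfl
      rw [h2, hrank]
    have h3 : Xᵀ.rank = s - 1 := by rw [Matrix.rank_transpose, h1]
    rw [Matrix.rank_eq_finrank_span_cols] at h3
    exact h3
  have hphirange : Module.finrank ℝ (LinearMap.range (phi c)) = 1 := by
    have h1 : LinearMap.range (phi c) ≠ ⊥ := by
      intro h
      have h2 : phi c c ∈ LinearMap.range (phi c) := LinearMap.mem_range_self _ _
      rw [h, Submodule.mem_bot] at h2
      have h3 : (0:ℝ) < ∑ k, c k * c k := by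
        refine Finset.sum_pos' (fun k _ => mul_self_nonneg _)
          ⟨i0, Finset.mem_univ _, mul_self_pos.mpr hi0⟩
      rw [phi_apply] at h2
      rw [h2] at h3
      exact lt_irrefl _ h3
    have h5 : Module.finrank ℝ (LinearMap.range (phi c)) ≠ 0 := by
      intro h; exact h1 (Submodule.finrank_eq_zero.mp h)
    have h6 := Submodule.finrank_le (LinearMap.range (phi c))
    rw [Module.finrank_self] at h6
    omega
  have hkerphi : Module.finrank ℝ (LinearMap.ker (phi c)) = s - 1 := by
    have h1 := LinearMap.finrank_range_add_finrank_ker (phi c)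
    rw [hphirange, hfinpi] at h1
    omega
  have hle : Rspace ≤ LinearMap.ker (phi c) := by
    rw [hRspace, Submodule.span_le]
    rintro _ ⟨p, rfl⟩
    rw [SetLike.mem_coe, LinearMap.mem_ker]
    have h3 := congrFun hTc p
    have h4 : (∑ k, c k • x k) p = 0 := h3
    rw [Finset.sum_apply] at h4
    rw [phi_apply]
    simpa [hrows] using h4
  have hRker : Rspace = LinearMap.ker (phi c) :=
    Submodule.eq_of_le_of_finrank_eq hle (by rw [hRrank, hkerphi])
  have hmemW : ∀ y z : Fin s → ℝ, phi c y = 0 → phi c z = 0 → y * z ∈ Rspace * Rspace :=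
    fun y z hy hz => Submodule.mul_mem_mul
      (by rw [hRker]; exact LinearMap.mem_ker.mpr hy)
      (by rw [hRker]; exact LinearMap.mem_ker.mpr hz)
  set W : Submodule ℝ (Fin s → ℝ) := Rspace * Rspace with hW
  -- range of B = image under TT x of W
  have hsetmul : (Set.range fun pq : Fin n × Fin n => rows pq.1 * rows pq.2)
      = Set.range rows * Set.range rows := by
    ext v
    rw [Set.mem_mul]
    constructor
    · rintro ⟨⟨p, q⟩, rfl⟩
      exact ⟨rows p, ⟨p, rfl⟩, rows q, ⟨q, rfl⟩, rfl⟩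
    · rintro ⟨a2, ⟨p, rfl⟩, b2, ⟨q, rfl⟩, rfl⟩
      exact ⟨(p, q), rfl⟩
  have hspanW : Submodule.span ℝ (Set.range fun pq : Fin n × Fin n => rows pq.1 * rows pq.2)
      = W := by
    rw [hsetmul, ← Submodule.span_mul_span, ← hRspace]
  have hrB : B.rank = Module.finrank ℝ (Submodule.map (TT x) W) := by
    have hBT : (Bᵀ : Matrix (Fin n × Fin n) (Fin n) ℝ)
        = fun pq => TT x (rows pq.1 * rows pq.2) := by
      funext pq i
      rw [Matrix.transpose_apply, hB, Matrix.of_apply]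
      rw [TT_apply, Finset.sum_apply]
      exact Finset.sum_congr rfl fun k _ => by
        simp only [hrows, Pi.smul_apply, Pi.mul_apply, smul_eq_mul]
        ring
    rw [Matrix.rank_eq_finrank_span_cols, show B.col = Bᵀ from rfl, hBT]
    rw [show (fun pq : Fin n × Fin n => TT x (rows pq.1 * rows pq.2))
        = TT x ∘ (fun pq : Fin n × Fin n => rows pq.1 * rows pq.2) from rfl]
    rw [Set.range_comp, ← Submodule.map_span, hspanW]
  by_cases hthree : ∃ a b d : Fin s, a ≠ b ∧ a ≠ d ∧ b ≠ d ∧ c a ≠ 0 ∧ c b ≠ 0 ∧ c d ≠ 0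
  · -- support of c has at least three elements: W = ⊤ and rank B = s - 1
    obtain ⟨a, b, d0, hab, had, hbd, hca, hcb, hcd⟩ := hthree
    have hsingle : ∀ m, (Pi.single m 1 : Fin s → ℝ) ∈ W := by
      intro m
      by_cases hm : c m = 0
      · have h8 : phi c (Pi.single m 1) = 0 := by rw [phi_single, hm, zero_mul]
        have h9 : (Pi.single m 1 : Fin s → ℝ) * Pi.single m 1 = Pi.single m 1 := by
          funext t
          rcases eq_or_ne t m with rfl | htm
          · simp
          · simp [Pi.single_eq_of_ne htm]
        have h10 := hmemW _ _ h8 h8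
        rwa [h9] at h10
      · obtain ⟨a', b', ha'b', hma', hmb', hca', hcb'⟩ :
            ∃ a' b', a' ≠ b' ∧ m ≠ a' ∧ m ≠ b' ∧ c a' ≠ 0 ∧ c b' ≠ 0 := by
          rcases eq_or_ne m a with rfl | h1
          · exact ⟨b, d0, hbd, hab, had, hcb, hcd⟩
          · rcases eq_or_ne m b with rfl | h2
            · exact ⟨a, d0, had, Ne.symm hab, hbd, hca, hcd⟩
            · exact ⟨a, b, hab, h1, h2, hca, hcb⟩
        set v1 : Fin s → ℝ := c a' • (Pi.single m 1 : Fin s → ℝ) - c m • (Pi.single a' 1 : Fin s → ℝ) with hv1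
        set v2 : Fin s → ℝ := c b' • (Pi.single m 1 : Fin s → ℝ) - c m • (Pi.single b' 1 : Fin s → ℝ) with hv2
        have hv10 : phi c v1 = 0 := by
          rw [hv1, map_sub, map_smul, map_smul, phi_single, phi_single]
          simp; ring
        have hv20 : phi c v2 = 0 := by
          rw [hv2, map_sub, map_smul, map_smul, phi_single, phi_single]
          simp; ring
        have hprod : v1 * v2 = (c a' * c b') • (Pi.single m 1 : Fin s → ℝ) := by
          funext t
          simp only [hv1, hv2, Pi.mul_apply, Pi.sub_apply, Pi.smul_apply, smul_eq_mul,
            Pi.single_apply]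
          rcases eq_or_ne t m with h1 | h1
          · simp [h1, hma', hmb']
            try ring
          · rcases eq_or_ne t a' with h2 | h2
            · simp [h1, h2, Ne.symm hma', ha'b']
              try ring
            · simp [h1, h2]
              try ring
        have h10 := hmemW v1 v2 hv10 hv20
        rw [hprod] at h10
        have h11 := Submodule.smul_mem W (c a' * c b')⁻¹ h10
        rwa [smul_smul, inv_mul_cancel₀ (mul_ne_zero hca' hcb'), one_smul] at h11
    have hWtop : W = ⊤ := by
      rw [eq_top_iff]
      intro v _
      have h12 := eq_sum_single v
      rw [h12]
      exact Submodule.sum_mem _ fun k _ => Submodule.smul_mem _ _ (hsingle k)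
    have hfr : Module.finrank ℝ (Submodule.map (TT x) W) = s - 1 := by
      rw [hWtop, Submodule.map_top, range_TT, hrank]
    have hrankB := hrB.trans hfr
    have hs3 : 3 ≤ s := by
      have h13 : ({a, b, d0} : Finset (Fin s)).card = 3 := by
        rw [Finset.card_insert_of_notMem (by simp [hab, had]), Finset.card_pair hbd]
      have h14 := Finset.card_le_univ ({a, b, d0} : Finset (Fin s))
      rw [h13] at h14; simpa using h14
    have hnopair : ¬∃ i j, i ≠ j ∧ x i = -x j := by
      rintro ⟨p, q, hpq, hpairx⟩
      obtain ⟨hcab2, hcane2, hcsupp2⟩ := pair_aux x c hrel hpq hpairx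
      obtain ⟨k, hk_or, hk1, hk2⟩ := third (i0 := p) (j0 := q) hab had hbd
      have hk3 : c k ≠ 0 := by rcases hk_or with rfl | rfl | rfl; exacts [hca, hcb, hcd]
      exact hk3 (hcsupp2 k hk1 hk2)
    refine ⟨by rw [hrankB]; omega, ?_, fun h => absurd h hnopair⟩
    intro h
    rw [hrankB] at h
    exact absurd h (by omega)
  · -- support of c is exactly {i0, j0}
    push_neg at hthree
    have hsupp : ∀ k, k ≠ i0 → k ≠ j0 → c k = 0 :=
      fun k hk1 hk2 => hthree i0 j0 k hij (Ne.symm hk1) (Ne.symm hk2) hi0 hj0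
    have h5 : c i0 • x i0 + c j0 • x j0 = 0 := by
      have h5a : (∑ k, c k • x k) = (0 : Fin n → ℝ) := hTc
      rwa [sum_pair_support hij (fun k => c k • x k)
        (fun k h1 h2 => by show c k • x k = 0; rw [hsupp k h1 h2, zero_smul])] at h5a
    have h6 : c j0 • x j0 = (-(c i0)) • x i0 := by
      rw [neg_smul]; exact eq_neg_of_add_eq_zero_right h5
    have hxj : x j0 = (-(c i0) / c j0) • x i0 := by
      rw [div_eq_inv_mul, ← smul_smul, ← h6, smul_smul, inv_mul_cancel₀ hj0, one_smul]
    set S0 : Set (Fin s) := {k | k ≠ i0 ∧ k ≠ j0} with hS0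
    set A : Set (Fin s → ℝ) := (fun k => (Pi.single k 1 : Fin s → ℝ)) '' S0 with hA
    set u : Fin s → ℝ := (c j0)^2 • (Pi.single i0 1 : Fin s → ℝ) + (c i0)^2 • (Pi.single j0 1 : Fin s → ℝ) with hu
    have hui : u i0 = (c j0)^2 := by
      simp [hu, Pi.single_apply, hij]
    have huj : u j0 = (c i0)^2 := by
      simp [hu, Pi.single_apply, Ne.symm hij]
    have hW2 : W = Submodule.span ℝ (insert u A) := by
      apply le_antisymm
      · rw [hW, Submodule.mul_le]
        intro y hy z hz
        rw [hRker] at hy hz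
        have hy0 : phi c y = 0 := LinearMap.mem_ker.mp hy
        have hz0 : phi c z = 0 := LinearMap.mem_ker.mp hz
        have hy2 : c i0 * y i0 + c j0 * y j0 = 0 := by
          have h7 : (∑ k, c k * y k) = 0 := hy0
          rwa [sum_pair_support hij (fun k => c k * y k)
            (fun k h1 h2 => by show c k * y k = 0; rw [hsupp k h1 h2, zero_mul])] at h7
        have hz2 : c i0 * z i0 + c j0 * z j0 = 0 := by
          have h7 : (∑ k, c k * z k) = 0 := hz0
          rwa [sum_pair_support hij (fun k => c k * z k)
            (fun k h1 h2 => by show c k * z k = 0; rw [hsupp k h1 h2, zero_mul])] at h7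
        have hyj : y j0 = -(c i0) * y i0 / c j0 := by
          field_simp
          linear_combination hy2
        have hzj : z j0 = -(c i0) * z i0 / c j0 := by
          field_simp
          linear_combination hz2
        have hsub : y * z - ((y i0 * z i0) / (c j0)^2) • u ∈ Submodule.span ℝ A := by
          apply mem_span_single
          intro k hk
          have hk' : k = i0 ∨ k = j0 := by
            by_contra h'
            push_neg at h'
            exact hk ⟨h'.1, h'.2⟩
          rcases hk' with rfl | rfl
          · simp only [Pi.sub_apply, Pi.mul_apply, Pi.smul_apply, smul_eq_mul]
            rw [hui]
            field_simp
            ring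
          · simp only [Pi.sub_apply, Pi.mul_apply, Pi.smul_apply, smul_eq_mul]
            rw [huj, hyj, hzj]
            field_simp
            ring
        have hdecomp : y * z = (y * z - ((y i0 * z i0) / (c j0)^2) • u)
            + ((y i0 * z i0) / (c j0)^2) • u := by
          rw [sub_add_cancel]
        rw [hdecomp]
        exact Submodule.add_mem _
          (Submodule.span_mono (Set.subset_insert u A) hsub)
          (Submodule.smul_mem _ _ (Submodule.subset_span (Set.mem_insert u A)))
      · rw [Submodule.span_le, Set.insert_subset_iff]
        constructor
        · set v : Fin s → ℝ := c j0 • (Pi.single i0 1 : Fin s → ℝ) - c i0 • (Pi.single j0 1 : Fin s → ℝ) with hv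
          have hv0 : phi c v = 0 := by
            rw [hv, map_sub, map_smul, map_smul, phi_single, phi_single]
            simp; ring
          have hprod : v * v = u := by
            funext t
            simp only [hv, hu, Pi.mul_apply, Pi.sub_apply, Pi.add_apply, Pi.smul_apply,
              smul_eq_mul, Pi.single_apply]
            rcases eq_or_ne t i0 with h1 | h1
            · simp [h1, hij]
              try ring
            · rcases eq_or_ne t j0 with h2 | h2
              · simp [h1, h2, Ne.symm hij]
                try ring
              · simp [h1, h2]
                try ring
          have h10 := hmemW v v hv0 hv0
          rw [hprod] at h10
          exact h10
        · rintro _ ⟨k, hk, rfl⟩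
          obtain ⟨hk1, hk2⟩ := hk
          have h8 : phi c (Pi.single k 1) = 0 := by rw [phi_single, hsupp k hk1 hk2, zero_mul]
          have h9 : (Pi.single k 1 : Fin s → ℝ) * Pi.single k 1 = Pi.single k 1 := by
            funext t
            rcases eq_or_ne t k with rfl | htk
            · simp
            · simp [Pi.single_eq_of_ne htk]
          have h10 := hmemW _ _ h8 h8
          rwa [h9] at h10
    have himA : TT x '' A = x '' S0 := by
      rw [hA, Set.image_image]
      exact Set.image_congr fun k _ => by rw [TT_single, one_smul]
    have hmap : Submodule.map (TT x) W
        = Submodule.span ℝ (insert (TT x u) (x '' S0)) := by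
      rw [hW2, Submodule.map_span, Set.image_insert_eq, himA]
    set α : ℝ := (c j0)^2 - (c i0)^3 / c j0 with hαdef
    have hTu : TT x u = α • x i0 := by
      rw [hu, map_add, map_smul, map_smul, TT_single, TT_single, one_smul, one_smul,
        hxj, smul_smul, ← add_smul]
      congr 1
      rw [hαdef]
      field_simp
      ring
    have hindep1 := indep_aux x c hrel hj0
    have himg1 : x '' {k | k ≠ j0} = Set.range (fun k : {k : Fin s // k ≠ j0} => x k) := by
      ext v
      constructor
      · rintro ⟨k, hk, rfl⟩; exact ⟨⟨k, hk⟩, rfl⟩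
      · rintro ⟨⟨k, hk⟩, rfl⟩; exact ⟨k, hk, rfl⟩
    by_cases hcc : c i0 = c j0
    · -- equality case: rank = s - 2 and x j0 = -x i0
      have hα : α = 0 := by
        rw [hαdef, hcc]
        field_simp
        ring
      have hmap2 : Submodule.map (TT x) W = Submodule.span ℝ (x '' S0) := by
        rw [hmap, hTu, hα, zero_smul, Submodule.span_insert_zero]
      have himg : x '' S0 = Set.range (fun k : {k : Fin s // k ≠ i0 ∧ k ≠ j0} => x k) := by
        ext v
        constructor
        · rintro ⟨k, hk, rfl⟩; exact ⟨⟨k, hk⟩, rfl⟩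
        · rintro ⟨⟨k, hk⟩, rfl⟩; exact ⟨k, hk, rfl⟩
      have hindep2 : LinearIndependent ℝ (fun k : {k : Fin s // k ≠ i0 ∧ k ≠ j0} => x k) := by
        have h20 := hindep1.comp
          (fun k : {k : Fin s // k ≠ i0 ∧ k ≠ j0} => (⟨k.1, k.2.2⟩ : {k : Fin s // k ≠ j0}))
          (fun a2 b2 h => by
            simp only [Subtype.mk.injEq] at h
            exact Subtype.ext h)
        exact h20
      have hfr : Module.finrank ℝ (Submodule.map (TT x) W) = s - 2 := by
        rw [hmap2, himg, finrank_span_eq_card hindep2, card_ne_ne hij]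
      have hrankB := hrB.trans hfr
      have hpairx : x j0 = -x i0 := by
        rw [hxj, hcc, neg_div, div_self hj0, neg_smul, one_smul]
      exact ⟨le_of_eq hrankB.symm, fun _ => ⟨j0, i0, hj0ne, hpairx⟩, fun _ => hrankB⟩
    · -- strict case: rank = s - 1 and no antipodal pair
      have hα : α ≠ 0 := by
        intro h
        apply hcc
        apply cube_inj (a := c i0) (b := c j0)
        rw [hαdef] at h
        field_simp at h
        linarith
      have hspan1 : Submodule.span ℝ (insert (TT x u) (x '' S0))
          = Submodule.span ℝ (insert (x i0) (x '' S0)) := by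
        rw [hTu]
        apply le_antisymm
        · rw [Submodule.span_le, Set.insert_subset_iff]
          exact ⟨Submodule.smul_mem _ _ (Submodule.subset_span (Set.mem_insert _ _)),
            fun v hv => Submodule.subset_span (Set.mem_insert_of_mem _ hv)⟩
        · rw [Submodule.span_le, Set.insert_subset_iff]
          constructor
          · have h16 : α • x i0 ∈ Submodule.span ℝ (insert (α • x i0) (x '' S0)) :=
              Submodule.subset_span (Set.mem_insert _ _)
            have h17 := Submodule.smul_mem _ α⁻¹ h16
            rw [smul_smul, inv_mul_cancel₀ hα, one_smul] at h17
            exact h17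
          · exact fun v hv => Submodule.subset_span (Set.mem_insert_of_mem _ hv)
      have hins : insert (x i0) (x '' S0) = x '' {k | k ≠ j0} := by
        ext v
        simp only [Set.mem_insert_iff, Set.mem_image, Set.mem_setOf_eq, hS0]
        constructor
        · rintro (rfl | ⟨k, ⟨hk1, hk2⟩, rfl⟩)
          · exact ⟨i0, hij, rfl⟩
          · exact ⟨k, hk2, rfl⟩
        · rintro ⟨k, hk, rfl⟩
          rcases eq_or_ne k i0 with rfl | hki
          · exact Or.inl rfl
          · exact Or.inr ⟨k, ⟨hki, hk⟩, rfl⟩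
      have hfr : Module.finrank ℝ (Submodule.map (TT x) W) = s - 1 := by
        rw [hmap, hspan1, hins, himg1, finrank_span_eq_card hindep1, card_ne]
      have hrankB := hrB.trans hfr
      have hnopair : ¬∃ i j, i ≠ j ∧ x i = -x j := by
        rintro ⟨p, q, hpq, hpairx⟩
        obtain ⟨hcab2, hcane2, hcsupp2⟩ := pair_aux x c hrel hpq hpairx
        have hia : i0 = p ∨ i0 = q := by
          by_contra h; push_neg at h; exact hi0 (hcsupp2 i0 h.1 h.2)
        have hja : j0 = p ∨ j0 = q := by
          by_contra h; push_neg at h; exact hj0 (hcsupp2 j0 h.1 h.2)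
        apply hcc
        rcases hia with rfl | rfl <;> rcases hja with rfl | rfl
        · rfl
        · exact hcab2
        · exact hcab2.symm
        · rfl
      refine ⟨by rw [hrankB]; omega, ?_, fun h => absurd h hnopair⟩
      intro h
      rw [hrankB] at h
      exact absurd h (by omega)
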